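/- Let T_n be a transfer matrix on E_n = {0,1}^n with product form T_n(a,b) = ∏_{i=0}^{n-1} T_{a_i, a_{i⊕1}, b_i} for scalars T_{a,b,c}. Suppose there exist square matrices V^0, V^1, H^0, H^1 (all the same size) with V^x H^y = 0 for x ≠ y, and such that V^x H^x = Σ_{y,y' ∈ {0,1}} H^y V^{y'} T_{y,y',x} for each x ∈ {0,1}. Then the measure μ defined on E_n by μ(x) = Trace(∏_{i=0}^{n-1} V^{x_i} H^{x_i}) satisfies μ = μ T_n, i.e. for all b ∈ E_n, μ(b) = Σ_{a ∈ E_n} μ(a) T_n(a,b). -/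

import Mathlib

open Matrix

lemma aux_smul_prod {R : Type*} [CommRing R] {A : Type*} [Ring A] [Algebra R A]
    (k : ℕ) (c : Fin k → R) (M : Fin k → A) :
    (List.ofFn fun i => c i • M i).prod = (∏ i, c i) • (List.ofFn M).prod := by
  induction k with
  | zero => simp
  | succ k ih =>
    rw [List.ofFn_succ, List.ofFn_succ (f := M), List.prod_cons, List.prod_cons,
      ih (fun i => c i.succ) (fun i => M i.succ), Fin.prod_univ_succ,
      smul_mul_smul_comm]

lemma aux_expand {A : Type*} [Ring A] {α : Type*} [Fintype α] (k : ℕ)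
    (f : Fin k → α → A) :
    (List.ofFn fun i => ∑ x : α, f i x).prod
      = ∑ g : Fin k → α, (List.ofFn fun i => f i (g i)).prod := by
  induction k with
  | zero => simp
  | succ k ih =>
    rw [List.ofFn_succ, List.prod_cons, ih (fun i x => f i.succ x)]
    rw [← Fintype.sum_equiv (Fin.consEquiv (fun _ => α))
      (fun p => (List.ofFn fun i => f i ((Fin.consEquiv (fun _ => α)) p i)).prod)
      (fun g => (List.ofFn fun i => f i (g i)).prod) (fun p => rfl)]
    rw [Fintype.sum_prod_type]
    rw [Finset.sum_mul]
    refine Finset.sum_congr rfl fun x _ => ?_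
    rw [Finset.mul_sum]
    refine Finset.sum_congr rfl fun g _ => ?_
    rw [List.ofFn_succ, List.prod_cons]
    simp [Fin.consEquiv]

lemma aux_interleave {A : Type*} [Ring A] (k : ℕ) (X Y : Fin (k+1) → A) :
    (List.ofFn fun i => X i * Y i).prod
      = X 0 * (List.ofFn fun i : Fin k => Y i.castSucc * X i.succ).prod * Y (Fin.last k) := by
  induction k with
  | zero => simp
  | succ k ih =>
    rw [List.ofFn_succ' (f := fun i => X i * Y i), List.concat_eq_append, List.prod_append,
      List.prod_cons, List.prod_nil, ih (fun i => X i.castSucc) (fun i => Y i.castSucc),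
      List.ofFn_succ' (f := fun i : Fin (k+1) => Y i.castSucc * X i.succ),
      List.concat_eq_append, List.prod_append, List.prod_cons, List.prod_nil]
    have h1 : (Fin.last k).succ = Fin.last (k+1) := rfl
    simp only [Fin.succ_castSucc, Fin.castSucc_zero, h1, mul_one, mul_assoc]

lemma aux_rotate {m k : ℕ} (W : Fin (k+1) → Matrix (Fin m) (Fin m) ℂ) :
    Matrix.trace ((List.ofFn fun i => W (i+1)).prod) = Matrix.trace ((List.ofFn W).prod) := by
  rw [List.ofFn_succ' (f := fun i => W (i+1))]
  simp only [Fin.coeSucc_eq_succ, Fin.last_add_one]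
  rw [List.concat_eq_append, List.prod_append, List.prod_cons, List.prod_nil, mul_one,
    Matrix.trace_mul_comm, List.ofFn_succ (f := W), List.prod_cons]

theorem invariance_of_trace_measure (n m : ℕ)
    (T : Bool → Bool → Bool → ℂ)
    (Tn : (Fin (n + 1) → Bool) → (Fin (n + 1) → Bool) → ℂ)
    (hTn : ∀ a b, Tn a b = ∏ i, T (a i) (a (i + 1)) (b i))
    (V H : Bool → Matrix (Fin m) (Fin m) ℂ)
    (hVH0 : ∀ x y, x ≠ y → V x * H y = 0)
    (hVH : ∀ x, V x * H x = ∑ y : Bool, ∑ y' : Bool, T y y' x • (H y * V y'))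
    (μ : (Fin (n + 1) → Bool) → ℂ)
    (hμ : ∀ x, μ x = Matrix.trace ((List.ofFn fun i => V (x i) * H (x i)).prod)) :
    ∀ b, μ b = ∑ a : Fin (n + 1) → Bool, μ a * Tn a b := by
  intro b
  -- cyclic identity
  have cyc : ∀ y y' : Fin (n+1) → Bool,
      Matrix.trace ((List.ofFn fun i => H (y i) * V (y' i)).prod)
        = Matrix.trace ((List.ofFn fun i => V (y' i) * H (y (i+1))).prod) := by
    intro y y'
    rw [aux_interleave n (fun i => H (y i)) (fun i => V (y' i)),
      List.ofFn_succ' (f := fun i : Fin (n+1) => V (y' i) * H (y (i+1)))]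
    simp only [Fin.coeSucc_eq_succ, Fin.last_add_one]
    rw [List.concat_eq_append, List.prod_append, List.prod_cons, List.prod_nil, mul_one,
      mul_assoc, Matrix.trace_mul_comm, mul_assoc]
  -- Step 1: expand the product
  have hfun : (fun i : Fin (n+1) => V (b i) * H (b i))
      = fun i => ∑ p : Bool × Bool, T p.1 p.2 (b i) • (H p.1 * V p.2) := by
    funext i
    rw [hVH, Fintype.sum_prod_type]
  rw [hμ b, hfun, aux_expand (α := Bool × Bool) (n+1) (fun i p => T p.1 p.2 (b i) • (H p.1 * V p.2)),
    Matrix.trace_sum]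
  have hterm : ∀ g : Fin (n+1) → Bool × Bool,
      Matrix.trace ((List.ofFn fun i => T (g i).1 (g i).2 (b i) • (H (g i).1 * V (g i).2)).prod)
        = (∏ i, T (g i).1 (g i).2 (b i))
            * Matrix.trace ((List.ofFn fun i => H ((g i).1) * V ((g i).2)).prod) := by
    intro g
    rw [aux_smul_prod (n+1) (fun i => T (g i).1 (g i).2 (b i))
      (fun i => H ((g i).1) * V ((g i).2)), Matrix.trace_smul, smul_eq_mul]
  rw [Finset.sum_congr rfl fun g _ => hterm g]
  -- split g into (y, y')
  rw [Fintype.sum_equiv (Equiv.arrowProdEquivProdArrow (Fin (n+1)) (fun _ => Bool) (fun _ => Bool))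
    (fun g => (∏ i, T (g i).1 (g i).2 (b i))
      * Matrix.trace ((List.ofFn fun i => H ((g i).1) * V ((g i).2)).prod))
    (fun p => (∏ i, T (p.1 i) (p.2 i) (b i))
      * Matrix.trace ((List.ofFn fun i => H (p.1 i) * V (p.2 i)).prod))
    (fun g => rfl), Fintype.sum_prod_type]
  -- collapse inner sum
  refine Finset.sum_congr rfl fun y _ => ?_
  have hcol : (∑ y' : Fin (n+1) → Bool, (∏ i, T (y i) (y' i) (b i))
      * Matrix.trace ((List.ofFn fun i => H (y i) * V (y' i)).prod))
      = (∏ i, T (y i) (y (i+1)) (b i))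
        * Matrix.trace ((List.ofFn fun i => H (y i) * V (y (i+1))).prod) := by
    refine Fintype.sum_eq_single (fun i => y (i+1)) fun y' hy' => ?_
    obtain ⟨i, hi⟩ := Function.ne_iff.mp hy'
    rw [cyc y y']
    have hz : (List.ofFn fun i => V (y' i) * H (y (i+1))).prod = 0 := by
      refine List.prod_eq_zero (List.mem_ofFn.mpr ⟨i, ?_⟩)
      exact hVH0 _ _ hi
    rw [hz, Matrix.trace_zero, mul_zero]
  rw [hcol, cyc y (fun i => y (i+1)), aux_rotate (fun j => V (y j) * H (y j)),
    ← hμ y, ← hTn y b, mul_comm]
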